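/- Let ψ be three times differentiable with ψ' > 0 and w(φ) = sqrt(ψ''(φ)² + ψ'(φ)²(1+ψ'(φ))²) > 0. Define the unit tangent T(φ) = (ψ''(φ) − i·ψ'(φ)(1+ψ'(φ)))/w(φ) · exp(−iφ). Then T'(φ) = i·h(φ)·T(φ), where h(φ) = (1+ψ'(φ))·[ψ'(φ)·(ψ'''(φ) − ψ'(φ) − ψ'(φ)²) − 2ψ''(φ)²]/w(φ)². -/

import Mathlib

open Complex
set_option maxHeartbeats 1600000 in

theorem deriv_unit_tangent_drive
    (ψ ψ' ψ'' ψ''' : ℝ → ℝ)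
    (hd1 : ∀ t, HasDerivAt ψ (ψ' t) t)
    (hd2 : ∀ t, HasDerivAt ψ' (ψ'' t) t)
    (hd3 : ∀ t, HasDerivAt ψ'' (ψ''' t) t)
    (hpos : ∀ t, 0 < ψ' t)
    (w : ℝ → ℝ)
    (hw : ∀ t, w t = Real.sqrt ((ψ'' t) ^ 2 + (ψ' t) ^ 2 * (1 + ψ' t) ^ 2))
    (hwpos : ∀ t, 0 < w t)
    (T : ℝ → ℂ)
    (hT : ∀ t, T t =
      (((ψ'' t : ℂ) - Complex.I * (ψ' t : ℂ) * (1 + (ψ' t : ℂ))) / (w t : ℂ)) *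
        Complex.exp (-(t : ℂ) * Complex.I))
    (h : ℝ → ℝ)
    (hh : ∀ t, h t =
      (1 + ψ' t) * (ψ' t * (ψ''' t - ψ' t - (ψ' t) ^ 2) - 2 * (ψ'' t) ^ 2) / (w t) ^ 2)
    (φ : ℝ) :
    deriv T φ = Complex.I * (h φ : ℂ) * T φ := by
  set a := ψ' φ with ha
  set b := ψ'' φ with hb
  set c := ψ''' φ with hc
  have hSpos : ∀ t, 0 < (ψ'' t) ^ 2 + (ψ' t) ^ 2 * (1 + ψ' t) ^ 2 := by
    intro t; have := hpos t; positivity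
  have hwne : w φ ≠ 0 := ne_of_gt (hwpos φ)
  have hwCne : (w φ : ℂ) ≠ 0 := by exact_mod_cast hwne
  have hsq : w φ ^ 2 = b ^ 2 + a ^ 2 * (1 + a) ^ 2 := by
    rw [hw φ]; exact Real.sq_sqrt (le_of_lt (hSpos φ))
  have hS : HasDerivAt (fun t => (ψ'' t) ^ 2 + (ψ' t) ^ 2 * (1 + ψ' t) ^ 2)
      (2 * b * c + 2 * a * b * (1 + a) ^ 2 + a ^ 2 * (2 * (1 + a) * b)) φ := by
    have h1 := ((hd3 φ).pow 2).add (((hd2 φ).pow 2).mul (((hd2 φ).const_add 1).pow 2))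
    refine h1.congr_deriv ?_; simp only [Pi.pow_apply]; ring
  have hwfun : w = fun t => Real.sqrt ((ψ'' t) ^ 2 + (ψ' t) ^ 2 * (1 + ψ' t) ^ 2) :=
    funext hw
  have hwd : HasDerivAt w
      (1 / (2 * w φ) * (2 * b * c + 2 * a * b * (1 + a) ^ 2 + a ^ 2 * (2 * (1 + a) * b))) φ := by
    have h2 := (Real.hasDerivAt_sqrt (ne_of_gt (hSpos φ))).comp φ hS
    rw [← hw φ] at h2
    exact h2.congr_of_eventuallyEq (Filter.Eventually.of_forall fun t => hw t)
  have hwC : HasDerivAt (fun t => ((w t : ℝ) : ℂ))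
      (((1 / (2 * w φ) * (2 * b * c + 2 * a * b * (1 + a) ^ 2 + a ^ 2 * (2 * (1 + a) * b)) : ℝ)) : ℂ) φ :=
    hwd.ofReal_comp
  have hf : HasDerivAt (fun t : ℝ => ((ψ' t : ℝ) : ℂ)) ((b : ℂ)) φ := (hd2 φ).ofReal_comp
  have hu : HasDerivAt (fun t => ((ψ'' t : ℂ) - Complex.I * (ψ' t : ℂ) * (1 + (ψ' t : ℂ))))
      ((c : ℂ) - Complex.I * (b : ℂ) * (1 + 2 * (a : ℂ))) φ := by
    have h3 := ((hd3 φ).ofReal_comp).sub (((hf.const_mul Complex.I)).mul (hf.const_add 1))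
    refine h3.congr_deriv ?_; push_cast; ring
  have hexp : HasDerivAt (fun t : ℝ => Complex.exp (-(t : ℂ) * Complex.I))
      (Complex.exp (-(φ : ℂ) * Complex.I) * (-Complex.I)) φ := by
    have hlin : HasDerivAt (fun t : ℝ => -(t : ℂ) * Complex.I) (-Complex.I) φ := by
      have h4 := ((Complex.ofRealCLM.hasDerivAt (x := φ)).neg).mul_const Complex.I
      exact h4.congr_deriv (by simp)
    exact hlin.cexp
  have hTd : HasDerivAt T
      ((((c : ℂ) - Complex.I * (b : ℂ) * (1 + 2 * (a : ℂ))) * (w φ : ℂ) -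
          ((ψ'' φ : ℂ) - Complex.I * (ψ' φ : ℂ) * (1 + (ψ' φ : ℂ))) *
            (((1 / (2 * w φ) * (2 * b * c + 2 * a * b * (1 + a) ^ 2 + a ^ 2 * (2 * (1 + a) * b)) : ℝ)) : ℂ)) /
          (w φ : ℂ) ^ 2 * Complex.exp (-(φ : ℂ) * Complex.I) +
        (((ψ'' φ : ℂ) - Complex.I * (ψ' φ : ℂ) * (1 + (ψ' φ : ℂ))) / (w φ : ℂ)) *
          (Complex.exp (-(φ : ℂ) * Complex.I) * (-Complex.I))) φ := by
    exact ((hu.div hwC hwCne).mul hexp).congr_of_eventuallyEq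
      (Filter.Eventually.of_forall fun t => hT t)
  rw [hTd.deriv, hT φ, hh φ]
  rw [show (w φ) ^ 2 = b ^ 2 + a ^ 2 * (1 + a) ^ 2 from hsq]
  have hw2C : ((w φ : ℂ)) ^ 2 = (b : ℂ) ^ 2 + (a : ℂ) ^ 2 * (1 + (a : ℂ)) ^ 2 := by
    exact_mod_cast congrArg (Complex.ofReal) hsq
  have hBne : ((b : ℂ) ^ 2 + (a : ℂ) ^ 2 * (1 + (a : ℂ)) ^ 2) ≠ 0 := by
    rw [← hw2C]; exact pow_ne_zero _ hwCne
  set E := Complex.exp (-(φ : ℂ) * Complex.I) with hE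
  push_cast
  rw [hw2C]
  field_simp
  ring_nf
  simp only [← ha, ← hb, ← hc]
  rw [hw2C]
  have hI2 : Complex.I ^ 2 = -1 := Complex.I_sq
  have hI3 : Complex.I ^ 3 = -Complex.I := by rw [pow_succ, hI2]; ring
  have hI4 : Complex.I ^ 4 = 1 := by rw [pow_succ, hI3]; simp [hI2]
  ring_nf
  simp only [hI2, hI3, hI4]
  ring
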